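/- Monomial relations among characters of ℂⁿ pass to their unitary parts: let α₁, …, α_m: ℂⁿ → ℂˣ be continuous group homomorphisms and let β₁, …, β_m: ℂⁿ → ℂˣ be unitary continuous group homomorphisms such that α_i·β_i⁻¹ is holomorphic for each i. Then for all tuples of integers (k₁, …, k_m) and (l₁, …, l_m): if ∏_{i=1}^m α_i^{k_i} = ∏_{i=1}^m α_i^{l_i} pointwise on ℂⁿ, then ∏_{i=1}^m β_i^{k_i} = ∏_{i=1}^m β_i^{l_i} pointwise on ℂⁿ. -/

import Mathlib

/-- Monomial relations among characters of `ℂⁿ` pass to their unitary parts: if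
`α₁, …, α_m : ℂⁿ → ℂˣ` are continuous homomorphisms and `β₁, …, β_m` are unitary
continuous homomorphisms such that each `αᵢ·βᵢ⁻¹` is holomorphic, then for all integer
tuples `(k₁, …, k_m)`, `(l₁, …, l_m)`: if `∏ αᵢ^{kᵢ} = ∏ αᵢ^{lᵢ}` pointwise on `ℂⁿ`,
then `∏ βᵢ^{kᵢ} = ∏ βᵢ^{lᵢ}` pointwise on `ℂⁿ`. -/
theorem stmt_7 {n m : ℕ} (α β : Fin m → (Fin n → ℂ) → ℂˣ)
    (hα_hom : ∀ i, ∀ x y : Fin n → ℂ, α i (x + y) = α i x * α i y)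
    (hβ_hom : ∀ i, ∀ x y : Fin n → ℂ, β i (x + y) = β i x * β i y)
    (hα_cont : ∀ i, Continuous fun z => (α i z : ℂ))
    (hβ_cont : ∀ i, Continuous fun z => (β i z : ℂ))
    (hβ_unit : ∀ i z, ‖(β i z : ℂ)‖ = 1)
    (hhol : ∀ i, Differentiable ℂ fun z => ((α i z * (β i z)⁻¹ : ℂˣ) : ℂ)) :
    ∀ k l : Fin m → ℤ,
      (∀ z : Fin n → ℂ, ∏ i, α i z ^ k i = ∏ i, α i z ^ l i) →
      ∀ z : Fin n → ℂ, ∏ i, β i z ^ k i = ∏ i, β i z ^ l i := by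

  intro k l hkl z
  set γ : Fin m → (Fin n → ℂ) → ℂˣ := fun i z => α i z * (β i z)⁻¹ with hγ
  -- homomorphism values at 0
  have hα0 : ∀ i, α i 0 = 1 := by
    intro i
    have h := hα_hom i 0 0
    rw [add_zero] at h
    exact (left_eq_mul.mp h)
  have hβ0 : ∀ i, β i 0 = 1 := by
    intro i
    have h := hβ_hom i 0 0
    rw [add_zero] at h
    exact (left_eq_mul.mp h)
  have hγ0 : ∀ i, γ i 0 = 1 := by
    intro i; simp [hγ, hα0 i, hβ0 i]
  -- the unitary part product and the holomorphic part product
  set d : Fin m → ℤ := fun i => k i - l i with hd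
  set B : (Fin n → ℂ) → ℂˣ := fun z => ∏ i, β i z ^ d i with hB
  set H : (Fin n → ℂ) → ℂˣ := fun z => ∏ i, γ i z ^ d i with hH
  -- relation: H z * B z = 1
  have hrel : ∀ w, H w * B w = 1 := by
    intro w
    have h1 : ∏ i, α i w ^ d i = 1 := by
      have := hkl w
      calc ∏ i, α i w ^ d i = ∏ i, (α i w ^ k i * (α i w ^ l i)⁻¹) := by
            simp [hd, zpow_sub]
        _ = (∏ i, α i w ^ k i) * (∏ i, α i w ^ l i)⁻¹ := by
            rw [Finset.prod_mul_distrib, Finset.prod_inv_distrib]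
        _ = 1 := by rw [this, mul_inv_cancel]
    calc H w * B w = ∏ i, (γ i w ^ d i * β i w ^ d i) := by
          rw [hH, hB, Finset.prod_mul_distrib]
      _ = ∏ i, α i w ^ d i := by
          refine Finset.prod_congr rfl fun i _ => ?_
          rw [← mul_zpow]
          congr 1
          simp [hγ]
      _ = 1 := h1
  -- H is holomorphic
  have hHdiff : Differentiable ℂ fun w => (H w : ℂ) := by
    have : (fun w => (H w : ℂ)) = fun w => ∏ i, ((γ i w : ℂ)) ^ d i := by
      funext w
      rw [hH]
      push_cast [Units.val_zpow_eq_zpow_val]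
      rfl
    rw [this]
    have key : ∀ s : Finset (Fin m),
        Differentiable ℂ fun w => ∏ i ∈ s, ((γ i w : ℂ)) ^ d i := by
      intro s
      induction s using Finset.induction with
      | empty => simpa using differentiable_const (1 : ℂ)
      | insert a s' hne ih =>
        have ha : Differentiable ℂ fun w => ((γ a w : ℂ)) ^ d a :=
          Differentiable.zpow (hhol a) (Or.inl fun x => (γ a x).ne_zero)
        simp only [Finset.prod_insert hne]
        exact ha.mul ih
    exact key Finset.univ
  -- H is bounded (|H| = 1 since H = B⁻¹ and B is unitary)
  have habsB : ∀ w, ‖(B w : ℂ)‖ = 1 := by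
    intro w
    rw [hB]
    push_cast [Units.val_zpow_eq_zpow_val]
    rw [norm_prod]
    refine Finset.prod_eq_one fun i _ => ?_
    rw [norm_zpow, hβ_unit i w, one_zpow]
  have habsH : ∀ w, ‖(H w : ℂ)‖ = 1 := by
    intro w
    have : H w = (B w)⁻¹ := eq_inv_of_mul_eq_one_left (hrel w)
    rw [this]
    push_cast
    rw [norm_inv, habsB w, inv_one]
  have hbd : Bornology.IsBounded (Set.range fun w => (H w : ℂ)) := by
    rw [Metric.isBounded_iff_subset_closedBall 0]
    refine ⟨1, ?_⟩
    rintro x ⟨w, rfl⟩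
    simp [habsH w]
  -- Liouville: H is constant = H 0 = 1
  have hH1 : ∀ w, H w = 1 := by
    intro w
    have := Differentiable.apply_eq_apply_of_bounded hHdiff hbd w 0
    have h0 : H 0 = 1 := by
      rw [hH]
      exact Finset.prod_eq_one fun i _ => by rw [hγ0 i, one_zpow]
    exact Units.ext (by rw [this, h0, Units.val_one])
  -- conclude
  have hB1 : B z = 1 := by
    have := hrel z
    rw [hH1 z, one_mul] at this
    exact this
  have : ∏ i, (β i z ^ k i * (β i z ^ l i)⁻¹) = 1 := by
    calc ∏ i, (β i z ^ k i * (β i z ^ l i)⁻¹) = ∏ i, β i z ^ d i := by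
          refine Finset.prod_congr rfl fun i _ => ?_
          rw [hd, zpow_sub]
      _ = 1 := hB1
  rw [Finset.prod_mul_distrib, Finset.prod_inv_distrib] at this
  exact mul_inv_eq_one.mp this
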